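/- Fix θ > 0 and suppose Assumptions 1 and 2 hold (b, σ C¹ with 0 < σ² < C; h C¹ positive; k₊, k₋ C² with 0 < k₊, k₋ < K; H₊(·,θ) strictly decreasing and positive on (−∞,β₋(θ)), negative on (β₋(θ),β₊(θ)) if nonempty, and strictly increasing and positive on (β₊(θ),∞)). Let α < β with β > β₊(θ), set λ = H₊(β,θ), and assume ∂ₓH₊(β,θ) > 0. Suppose w : ℝ → ℝ is twice continuously differentiable on [α,β], satisfies (1/2)σ(x)²w''(x) + (1/2)θ(σ(x)w'(x))² + b(x)w'(x) + h(x) − λ = 0 for all x ∈ [α,β], and satisfies w'(α) = −k₊(α), w'(β) = k₋(β) and w''(β) = k₋'(β). Then w'(x) ≤ k₋(x) for all x ∈ [α,β]. -/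

import Mathlib

open Set Filter
open Topology

/-- the upper gradient bound `w' ≤ k₋` in the continuation
region, established in the proof of Theorem 4.1(II). -/
theorem upper_gradient_bound
    (θ : ℝ) (hθ : 0 < θ)
    (b σ h kp km : ℝ → ℝ) (C K : ℝ)
    (hb : ContDiff ℝ 1 b) (hσ : ContDiff ℝ 1 σ)
    (hσbd : ∀ x : ℝ, 0 < (σ x) ^ 2 ∧ (σ x) ^ 2 < C)
    (hh : ContDiff ℝ 1 h) (hhpos : ∀ x : ℝ, 0 < h x)
    (hkp : ContDiff ℝ 2 kp) (hkm : ContDiff ℝ 2 km)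
    (hkpbd : ∀ x : ℝ, 0 < kp x ∧ kp x < K)
    (hkmbd : ∀ x : ℝ, 0 < km x ∧ km x < K)
    (Hp : ℝ → ℝ)
    (hHp : ∀ x, Hp x = (1 / 2) * θ * (σ x) ^ 2 * (km x) ^ 2
      + (1 / 2) * (σ x) ^ 2 * deriv km x + b x * km x + h x)
    (βm βp : ℝ) (hβmp : βm ≤ βp)
    (hHp1 : StrictAntiOn Hp (Iio βm)) (hHp1pos : ∀ x < βm, 0 < Hp x)
    (hHp2 : ∀ x ∈ Ioo βm βp, Hp x < 0)
    (hHp3 : StrictMonoOn Hp (Ioi βp)) (hHp3pos : ∀ x, βp < x → 0 < Hp x)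
    (α β lam : ℝ) (hαβ : α < β) (hβ : βp < β)
    (hlam : lam = Hp β) (hHp'β : 0 < deriv Hp β)
    (w : ℝ → ℝ)
    (hw1 : ∀ x ∈ Icc α β, DifferentiableAt ℝ w x)
    (hw2 : ∀ x ∈ Icc α β, DifferentiableAt ℝ (deriv w) x)
    (hw2c : ContinuousOn (deriv (deriv w)) (Icc α β))
    (hODE : ∀ x ∈ Icc α β,
      (1 / 2) * (σ x) ^ 2 * deriv (deriv w) x
        + (1 / 2) * θ * (σ x * deriv w x) ^ 2
        + b x * deriv w x + h x - lam = 0)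
    (hw'α : deriv w α = -kp α)
    (hw'β : deriv w β = km β)
    (hw''β : deriv (deriv w) β = deriv km β) :
    ∀ x ∈ Icc α β, deriv w x ≤ km x := by
  have hσne : ∀ x : ℝ, (σ x) ^ 2 ≠ 0 := fun x => (hσbd x).1.ne'
  have hkmc : Continuous km := hkm.continuous
  have hkm1c : Continuous (deriv km) := hkm.continuous_deriv one_le_two
  have hHpc : Continuous Hp := by
    have hfe : Hp = fun x => (1 / 2) * θ * (σ x) ^ 2 * (km x) ^ 2
      + (1 / 2) * (σ x) ^ 2 * deriv km x + b x * km x + h x := funext hHp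
    rw [hfe]
    have hbc := hb.continuous
    have hσc := hσ.continuous
    have hhc := hh.continuous
    fun_prop
  have hlampos : 0 < lam := hlam ▸ hHp3pos β hβ
  -- key structural lemma : points with Hp above lam lie left of βm
  have key : ∀ t : ℝ, t ≤ β → lam < Hp t → t < βm := by
    intro t ht hlt
    by_contra hge
    push_neg at hge
    rcases lt_trichotomy t βp with h1 | h1 | h1
    · rcases eq_or_lt_of_le hge with heq | hlt2
      · -- t = βm (and βm < βp) : Hp t ≤ 0 by right continuity
        have htend : Tendsto Hp (𝓝[>] t) (𝓝 (Hp t)) :=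
          (hHpc.tendsto t).mono_left nhdsWithin_le_nhds
        have hev : ∀ᶠ z in 𝓝[>] t, Hp z ≤ 0 := by
          filter_upwards [self_mem_nhdsWithin,
            eventually_nhdsWithin_of_eventually_nhds (eventually_lt_nhds h1)]
            with z hz1 hz2
          have hz1' : βm < z := heq ▸ hz1
          exact (hHp2 z ⟨hz1', hz2⟩).le
        have : Hp t ≤ 0 := le_of_tendsto htend hev
        linarith
      · have := hHp2 t ⟨hlt2, h1⟩
        linarith
    · -- t = βp : Hp t ≤ lam by right continuity
      have hβ' : t < β := h1 ▸ hβ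
      have htend : Tendsto Hp (𝓝[>] t) (𝓝 (Hp t)) :=
        (hHpc.tendsto t).mono_left nhdsWithin_le_nhds
      have hev : ∀ᶠ z in 𝓝[>] t, Hp z ≤ lam := by
        filter_upwards [self_mem_nhdsWithin,
          eventually_nhdsWithin_of_eventually_nhds (eventually_lt_nhds hβ')]
          with z hz1 hz2
        have hz1' : βp < z := h1 ▸ hz1
        have : Hp z < Hp β := hHp3 (Set.mem_Ioi.mpr hz1') (Set.mem_Ioi.mpr hβ) hz2
        linarith [hlam ▸ this]
      have : Hp t ≤ lam := le_of_tendsto htend hev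
      linarith
    · rcases eq_or_lt_of_le ht with heq | hlt2
      · rw [heq] at hlt
        rw [hlam] at hlt
        exact lt_irrefl _ hlt
      · have hmono : Hp t < Hp β := hHp3 (Set.mem_Ioi.mpr h1) (Set.mem_Ioi.mpr hβ) hlt2
        rw [← hlam] at hmono
        linarith
  -- clamped version of deriv w
  set e : ℝ → ℝ := fun x => max α (min β x) with he
  have hclamp : ∀ x : ℝ, e x ∈ Icc α β :=
    fun x => ⟨le_max_left _ _, max_le hαβ.le (min_le_left _ _)⟩
  have hec : Continuous e := continuous_const.max (continuous_const.min continuous_id)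
  have hee : ∀ x ∈ Icc α β, e x = x := by
    intro x hx
    simp only [he, min_eq_right hx.2, max_eq_right hx.1]
  set W : ℝ → ℝ := fun x => deriv w (e x) with hWdef
  have hWc : Continuous W := by
    rw [continuous_iff_continuousAt]
    intro x
    exact ((hw2 (e x) (hclamp x)).continuousAt).comp hec.continuousAt
  set p : ℝ → ℝ := fun x => -(θ * (km x + W x) + 2 * b x / (σ x) ^ 2) with hpdef
  have hpc : Continuous p := by
    have h1 : Continuous fun x => 2 * b x / (σ x) ^ 2 :=
      (continuous_const.mul hb.continuous).div (hσ.continuous.pow 2) hσne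
    exact ((continuous_const.mul (hkmc.add hWc)).add h1).neg
  set P : ℝ → ℝ := fun x => ∫ t in α..x, p t with hPdef
  have hPd : ∀ x : ℝ, HasDerivAt P (p x) x :=
    fun x => (hpc.integral_hasStrictDerivAt α x).hasDerivAt
  have hPc : Continuous P := by
    have hPdiff : Differentiable ℝ P := fun x => (hPd x).differentiableAt
    exact hPdiff.continuous
  set Q : ℝ → ℝ := fun x => (2 * (Hp x - lam) / (σ x) ^ 2) * Real.exp (-P x) with hQdef
  have hQc : Continuous Q := by
    have h1 : Continuous fun x => 2 * (Hp x - lam) / (σ x) ^ 2 :=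
      (continuous_const.mul (hHpc.sub continuous_const)).div (hσ.continuous.pow 2) hσne
    exact h1.mul (Real.continuous_exp.comp hPc.neg)
  set G : ℝ → ℝ := fun x => (km x - deriv w x) * Real.exp (-P x) with hGdef
  -- G has derivative Q on [α, β]
  have hG : ∀ x ∈ Icc α β, HasDerivAt G (Q x) x := by
    intro x hx
    have h1 : HasDerivAt (fun y => km y - deriv w y)
        (deriv km x - deriv (deriv w) x) x :=
      ((hkm.differentiable two_ne_zero x).hasDerivAt).sub ((hw2 x hx).hasDerivAt)
    have h2 : HasDerivAt (fun y => Real.exp (-P y)) (Real.exp (-P x) * -p x) x :=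
      ((hPd x).neg).exp
    have h3 : HasDerivAt (fun y => (km y - deriv w y) * Real.exp (-P y)) _ x := h1.mul h2
    convert h3 using 1
    have hWx : W x = deriv w x := by simp only [hWdef]; rw [hee x hx]
    have hO := hODE x hx
    have hHx := hHp x
    simp only [hQdef, hpdef, hWx]
    have key2 : 2 * (Hp x - lam)
        = ((deriv km x - deriv (deriv w) x)
          + (km x - deriv w x) * (θ * (km x + deriv w x))) * (σ x) ^ 2
          + (km x - deriv w x) * (2 * b x) := by
      linear_combination 2 * hHx + 2 * hO
    field_simp [hσne x]
    have hs : σ x ^ 2 * (σ x ^ 2)⁻¹ = 1 := mul_inv_cancel₀ (hσne x)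
    linear_combination key2 / σ x ^ 2 + (deriv km x - deriv (deriv w) x
      + (km x - deriv w x) * (θ * (km x + deriv w x))) * hs
  have hQint : ∀ u v : ℝ, IntervalIntegrable Q MeasureTheory.volume u v :=
    fun u v => hQc.intervalIntegrable u v
  -- main argument
  intro x₀ hx₀
  by_contra hcon
  push_neg at hcon
  have hGx₀ : G x₀ < 0 := by
    rw [hGdef]
    exact mul_neg_of_neg_of_pos (by linarith) (Real.exp_pos _)
  have hGβ : G β = 0 := by
    rw [hGdef]; simp [hw'β]
  have hGα : 0 < G α := by
    rw [hGdef]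
    apply mul_pos _ (Real.exp_pos _)
    rw [hw'α]
    have := (hkmbd α).1
    have := (hkpbd α).1
    linarith
  have hsub1 : uIcc x₀ β ⊆ Icc α β := by
    rw [uIcc_of_le hx₀.2]
    exact Icc_subset_Icc hx₀.1 le_rfl
  have hsub2 : uIcc α x₀ ⊆ Icc α β := by
    rw [uIcc_of_le hx₀.1]
    exact Icc_subset_Icc le_rfl hx₀.2
  have hint1 : ∫ t in x₀..β, Q t = G β - G x₀ :=
    intervalIntegral.integral_eq_sub_of_hasDerivAt
      (fun t ht => hG t (hsub1 ht)) (hQint _ _)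
  have hint2 : ∫ t in α..x₀, Q t = G x₀ - G α :=
    intervalIntegral.integral_eq_sub_of_hasDerivAt
      (fun t ht => hG t (hsub2 ht)) (hQint _ _)
  -- there is t ∈ [x₀, β] with Hp t > lam
  obtain ⟨t, ht, hQt⟩ : ∃ t ∈ Icc x₀ β, 0 < Q t := by
    by_contra hno
    push_neg at hno
    have hle : ∫ t in x₀..β, Q t ≤ 0 := by
      have : (0:ℝ) ≤ ∫ t in x₀..β, -Q t :=
        intervalIntegral.integral_nonneg hx₀.2 (fun u hu => by linarith [hno u hu])
      rw [intervalIntegral.integral_neg] at this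
      linarith
    rw [hint1, hGβ] at hle
    linarith
  have hHpt : lam < Hp t := by
    have hE := Real.exp_pos (-P t)
    have ha : 0 < 2 * (Hp t - lam) / (σ t) ^ 2 := by
      rw [hQdef] at hQt
      nlinarith
    have hs := (hσbd t).1
    rcases (div_pos_iff.mp ha) with ⟨hnum, _⟩ | ⟨_, hden⟩
    · linarith
    · linarith
  have htβm : t < βm := key t ht.2 hHpt
  -- Hp > lam on [α, x₀], hence Q ≥ 0 there
  have hQnn : ∀ y ∈ Icc α x₀, 0 ≤ Q y := by
    intro y hy
    have hyt : y ≤ t := hy.2.trans ht.1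
    have hHy : lam < Hp y := by
      rcases eq_or_lt_of_le hyt with heq | hlt
      · rw [heq]; exact hHpt
      · have : Hp t < Hp y := hHp1 (Set.mem_Iio.mpr (lt_of_le_of_lt hyt htβm))
          (Set.mem_Iio.mpr htβm) hlt
        linarith
    rw [hQdef]
    apply mul_nonneg _ (Real.exp_pos _).le
    apply div_nonneg _ (sq_nonneg _)
    linarith
  have hge : 0 ≤ ∫ t in α..x₀, Q t :=
    intervalIntegral.integral_nonneg hx₀.1 hQnn
  rw [hint2] at hge
  linarith
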